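/- Let f be an R-closed homeomorphism of a compact metrizable space X that is not minimal, and let V be the set of points x outside Fix(f) whose orbit closure is connected. Then every point in the boundary closure(V) − V is a fixed point of f. -/

import Mathlib

open Topology Filter Set

/-- The ℤ-orbit of a point under a bijection. -/
def orbitE {X : Type*} (e : Equiv.Perm X) (x : X) : Set X :=
  Set.range fun n : ℤ => (e ^ n) x

/-- A homeomorphism is R-closed if the orbit-closure relation is closed. -/
def RClosed {X : Type*} [TopologicalSpace X] (f : X ≃ₜ X) : Prop :=
  IsClosed {p : X × X | p.2 ∈ closure (orbitE f.toEquiv p.1)}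

lemma continuous_zpow_apply {X : Type*} [TopologicalSpace X] (f : X ≃ₜ X) (n : ℤ) :
    Continuous fun y : X => (f.toEquiv ^ n) y := by
  induction n using Int.induction_on with
  | zero => simpa using continuous_id'
  | succ n ih =>
      have h : ∀ y : X, (f.toEquiv ^ ((n : ℤ) + 1)) y = (f.toEquiv ^ (n : ℤ)) (f y) := by
        intro y
        rw [zpow_add_one, Equiv.Perm.mul_apply]
        rfl
      simpa only [h, Function.comp_def] using ih.comp f.continuous
  | pred n ih =>
      have h : ∀ y : X, (f.toEquiv ^ (-(n : ℤ) - 1)) y = (f.toEquiv ^ (-(n : ℤ))) (f.symm y) := by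
        intro y
        rw [zpow_sub_one, Equiv.Perm.mul_apply]
        rfl
      simpa only [h, Function.comp_def] using ih.comp f.symm.continuous

lemma mem_orbitE {X : Type*} (e : Equiv.Perm X) (n : ℤ) (y : X) :
    (e ^ n) y ∈ orbitE e y := ⟨n, rfl⟩

lemma self_mem_orbitE {X : Type*} (e : Equiv.Perm X) (y : X) :
    y ∈ orbitE e y := ⟨0, rfl⟩

/-- Upper semicontinuity of orbit closures for an R-closed homeomorphism. -/
lemma usc_orbit {X : Type*} [TopologicalSpace X] [CompactSpace X]
    [TopologicalSpace.MetrizableSpace X] (f : X ≃ₜ X) (hf : RClosed f)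
    (x : X) {O : Set X} (hO : IsOpen O) (hxO : closure (orbitE f.toEquiv x) ⊆ O) :
    ∃ N : Set X, IsOpen N ∧ x ∈ N ∧ ∀ y ∈ N, closure (orbitE f.toEquiv y) ⊆ O := by
  have hScompact : IsCompact (Prod.fst ''
      ({p : X × X | p.2 ∈ closure (orbitE f.toEquiv p.1)} ∩ Prod.snd ⁻¹' Oᶜ)) := by
    apply IsCompact.image _ continuous_fst
    exact (hf.inter (hO.isClosed_compl.preimage continuous_snd)).isCompact
  have hSclosed : IsClosed (Prod.fst ''
      ({p : X × X | p.2 ∈ closure (orbitE f.toEquiv p.1)} ∩ Prod.snd ⁻¹' Oᶜ)) :=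
    hScompact.isClosed
  have hxS : x ∉ Prod.fst ''
      ({p : X × X | p.2 ∈ closure (orbitE f.toEquiv p.1)} ∩ Prod.snd ⁻¹' Oᶜ) := by
    rintro ⟨⟨a, b⟩, ⟨hab, hb⟩, rfl⟩
    exact hb (hxO hab)
  refine ⟨_ᶜ, hSclosed.isOpen_compl, hxS, fun y hy z hz => ?_⟩
  by_contra hzO
  exact hy ⟨(y, z), ⟨hz, hzO⟩, rfl⟩

lemma key_aux {X : Type*} [TopologicalSpace X] [CompactSpace X]
    [TopologicalSpace.MetrizableSpace X] (f : X ≃ₜ X) (hf : RClosed f)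
    (x : X) {U W : Set X} (hU : IsOpen U) (hW : IsOpen W) (hd : Disjoint U W)
    (hsub : closure (orbitE f.toEquiv x) ⊆ U ∪ W) (hx : x ∈ U)
    (hxV : x ∈ closure {y : X | f y ≠ y ∧ IsConnected (closure (orbitE f.toEquiv y))}) :
    closure (orbitE f.toEquiv x) ⊆ closure U := by
  obtain ⟨N, hNopen, hxN, hN⟩ := usc_orbit f hf x (hU.union hW) hsub
  have hxT : x ∈ closure ({y : X | f y ≠ y ∧ IsConnected (closure (orbitE f.toEquiv y))}
      ∩ (N ∩ U)) := by
    rw [mem_closure_iff] at hxV ⊢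
    intro o ho hxo
    obtain ⟨z, hz1, hz2⟩ := hxV (o ∩ (N ∩ U)) (ho.inter (hNopen.inter hU)) ⟨hxo, hxN, hx⟩
    exact ⟨z, hz1.1, hz2, hz1.2⟩
  have hTU : ∀ y ∈ ({y : X | f y ≠ y ∧ IsConnected (closure (orbitE f.toEquiv y))}
      ∩ (N ∩ U)), orbitE f.toEquiv y ⊆ U := by
    rintro y ⟨⟨-, hconn⟩, hyN, hyU⟩
    have h1 : closure (orbitE f.toEquiv y) ⊆ U :=
      hconn.isPreconnected.subset_left_of_subset_union hU hW hd (hN y hyN)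
        ⟨y, subset_closure (self_mem_orbitE f.toEquiv y), hyU⟩
    exact subset_closure.trans h1
  have horb : orbitE f.toEquiv x ⊆ closure U := by
    rintro - ⟨n, rfl⟩
    have hc : Continuous fun y : X => (f.toEquiv ^ n) y := continuous_zpow_apply f n
    have himg : (fun y : X => (f.toEquiv ^ n) y) ''
        ({y : X | f y ≠ y ∧ IsConnected (closure (orbitE f.toEquiv y))} ∩ (N ∩ U)) ⊆ U := by
      rintro - ⟨y, hy, rfl⟩
      exact hTU y hy (mem_orbitE f.toEquiv n y)
    have hmem : (f.toEquiv ^ n) x ∈ closure ((fun y : X => (f.toEquiv ^ n) y) ''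
        ({y : X | f y ≠ y ∧ IsConnected (closure (orbitE f.toEquiv y))} ∩ (N ∩ U))) :=
      (image_closure_subset_closure_image hc) ⟨x, hxT, rfl⟩
    exact closure_mono himg hmem
  exact closure_minimal horb isClosed_closure

theorem stmt_19 {X : Type*} [TopologicalSpace X] [CompactSpace X]
    [TopologicalSpace.MetrizableSpace X] (f : X ≃ₜ X) (hf : RClosed f)
    (hnm : ∃ x : X, closure (orbitE f.toEquiv x) ≠ Set.univ) :
    ∀ x ∈ closure {y : X | f y ≠ y ∧ IsConnected (closure (orbitE f.toEquiv y))} \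
        {y : X | f y ≠ y ∧ IsConnected (closure (orbitE f.toEquiv y))},
      f x = x := by
  rintro x ⟨hxcl, hxV⟩
  by_contra hfx
  have hCclosed : IsClosed (closure (orbitE f.toEquiv x)) := isClosed_closure
  have hxC : x ∈ closure (orbitE f.toEquiv x) :=
    subset_closure (self_mem_orbitE f.toEquiv x)
  have hnc : ¬ IsPreconnected (closure (orbitE f.toEquiv x)) := by
    intro h
    exact hxV ⟨hfx, ⟨x, hxC⟩, h⟩
  rw [IsPreconnected] at hnc
  push_neg at hnc
  obtain ⟨U', W', hU', hW', hcov, ⟨a, haC, haU⟩, ⟨b, hbC, hbW⟩, hemp⟩ := hnc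
  have hempmem : ∀ z, z ∈ closure (orbitE f.toEquiv x) → z ∈ U' → z ∈ W' → False := by
    intro z h1 h2 h3
    exact eq_empty_iff_forall_notMem.mp hemp z ⟨h1, h2, h3⟩
  have hAclosed : IsClosed (closure (orbitE f.toEquiv x) \ W') := hCclosed.sdiff hW'
  have hBclosed : IsClosed (closure (orbitE f.toEquiv x) \ U') := hCclosed.sdiff hU'
  have hdisj : Disjoint (closure (orbitE f.toEquiv x) \ W')
      (closure (orbitE f.toEquiv x) \ U') := by
    rw [Set.disjoint_left]
    rintro z ⟨hzC, hzW⟩ ⟨-, hzU⟩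
    rcases hcov hzC with h | h
    · exact hzU h
    · exact hzW h
  have haA : a ∈ closure (orbitE f.toEquiv x) \ W' :=
    ⟨haC, fun h => hempmem a haC haU h⟩
  have hbB : b ∈ closure (orbitE f.toEquiv x) \ U' :=
    ⟨hbC, fun h => hempmem b hbC h hbW⟩
  obtain ⟨U, W, hUo, hWo, hAU, hBW, hUW⟩ :=
    SeparatedNhds.of_isCompact_isCompact hAclosed.isCompact hBclosed.isCompact hdisj
  have hsub : closure (orbitE f.toEquiv x) ⊆ U ∪ W := by
    intro z hz
    rcases hcov hz with h | h
    · exact Or.inl (hAU ⟨hz, fun hw => hempmem z hz h hw⟩)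
    · exact Or.inr (hBW ⟨hz, fun hu => hempmem z hz hu h⟩)
  have hclU : ∀ z, z ∈ closure U → z ∈ W → False := by
    intro z hzU hzW
    obtain ⟨w, hw1, hw2⟩ := mem_closure_iff.mp hzU W hWo hzW
    exact (Set.disjoint_left.mp hUW) hw2 hw1
  have hclW : ∀ z, z ∈ closure W → z ∈ U → False := by
    intro z hzW hzU
    obtain ⟨w, hw1, hw2⟩ := mem_closure_iff.mp hzW U hUo hzU
    exact (Set.disjoint_left.mp hUW) hw1 hw2
  rcases hsub hxC with hxU | hxW
  · have hkey := key_aux f hf x hUo hWo hUW hsub hxU hxcl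
    exact hclU b (hkey hbC) (hBW hbB)
  · have hsub' : closure (orbitE f.toEquiv x) ⊆ W ∪ U := by rwa [union_comm]
    have hkey := key_aux f hf x hWo hUo hUW.symm hsub' hxW hxcl
    exact hclW a (hkey haC) (hAU haA)
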